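/- Let F be a fixed finite set of graphs, let Π be a set of t-boundaried graphs, let G1 and G2 be t-boundaried graphs, and let G := G1 ⊕ G2. Then G contains no graph of Π as a boundaried minor if and only if there exists a pair (Π1, Π2) ∈ split_F(Π) such that, for i ∈ {1,2}, G_i contains no graph of Π_i as a boundaried minor. -/

import Mathlib

namespace FDel

open scoped Classical

noncomputable section

/-- A boundaried `X`-labeled graph on the vertex universe `ℕ`: a (finite) vertex set,
a symmetric loopless adjacency relation, a labelset for each vertex, and a partial
assignment of boundary indices to vertices. -/
structure BLG (X : Type) where
  verts : Set ℕ
  Adj : ℕ → ℕ → Prop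
  label : ℕ → Set X
  bnd : ℕ → Option ℕ

variable {X : Type}

/-- Well-formedness of `G` as a `t`-boundaried `X`-labeled graph: the vertex set is finite,
adjacency is symmetric, loopless and supported on the vertex set, labels and boundary
indices live on vertices, the boundary assignment is injective, and indices lie in `{1,…,t}`. -/
def BLG.WF (t : ℕ) (G : BLG X) : Prop :=
  G.verts.Finite ∧
  (∀ u v, G.Adj u v → G.Adj v u) ∧
  (∀ v, ¬ G.Adj v v) ∧
  (∀ u v, G.Adj u v → u ∈ G.verts ∧ v ∈ G.verts) ∧
  (∀ v, v ∉ G.verts → G.label v = ∅ ∧ G.bnd v = none) ∧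
  (∀ u v i, G.bnd u = some i → G.bnd v = some i → u = v) ∧
  (∀ v i, G.bnd v = some i → v ∈ G.verts ∧ 1 ≤ i ∧ i ≤ t)

/-- Reachability inside the vertex set `S`. -/
def ReachIn (G : BLG X) (S : Set ℕ) (a b : ℕ) : Prop :=
  Relation.ReflTransGen (fun u v => G.Adj u v ∧ u ∈ S ∧ v ∈ S) a b

/-- `C` is (the vertex set of) a connected component of the subgraph of `G` induced by `S`. -/
def IsCompOf (G : BLG X) (S C : Set ℕ) : Prop :=
  ∃ v ∈ S, C = {w | w ∈ S ∧ ReachIn G S v w}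

/-- `G` is connected (and nonempty). -/
def BLG.Conn (G : BLG X) : Prop :=
  G.verts.Nonempty ∧ ∀ a ∈ G.verts, ∀ b ∈ G.verts, ReachIn G G.verts a b

/-- Isomorphism of boundaried labeled graphs: a bijection of the vertex sets preserving
adjacency, labelsets and boundary indices. -/
def Iso (G G' : BLG X) : Prop :=
  ∃ f : ℕ → ℕ, Set.BijOn f G.verts G'.verts ∧
    (∀ u ∈ G.verts, ∀ v ∈ G.verts, (G.Adj u v ↔ G'.Adj (f u) (f v))) ∧
    (∀ v ∈ G.verts, G'.label (f v) = G.label v) ∧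
    (∀ v ∈ G.verts, G'.bnd (f v) = G.bnd v)

/-- A boundaried labeled minor model of `H` in `G`. -/
structure MinorModel (H G : BLG X) (φ : ℕ → Set ℕ) : Prop where
  sub : ∀ v ∈ H.verts, φ v ⊆ G.verts
  nonempty : ∀ v ∈ H.verts, (φ v).Nonempty
  conn : ∀ v ∈ H.verts, ∀ a ∈ φ v, ∀ b ∈ φ v, ReachIn G (φ v) a b
  disj : ∀ u ∈ H.verts, ∀ v ∈ H.verts, u ≠ v → Disjoint (φ u) (φ v)
  edge : ∀ u ∈ H.verts, ∀ v ∈ H.verts, H.Adj u v → ∃ a ∈ φ u, ∃ b ∈ φ v, G.Adj a b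
  bnd_none : ∀ v ∈ H.verts, H.bnd v = none → ∀ a ∈ φ v, G.bnd a = none
  bnd_some : ∀ v ∈ H.verts, ∀ i, H.bnd v = some i →
    (∀ a ∈ φ v, G.bnd a = none ∨ G.bnd a = some i) ∧ ∃ a ∈ φ v, G.bnd a = some i
  labels : ∀ v ∈ H.verts, ∀ x, x ∈ H.label v → ∃ a ∈ φ v, x ∈ G.label a

/-- `H` is a boundaried labeled minor of `G`. -/
def Minor (H G : BLG X) : Prop := ∃ φ, MinorModel H G φ

/-- Auxiliary injection for the right summand of `⊕`: a vertex of `G2` that is a boundary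
vertex whose index also occurs in `G1` is identified with the corresponding vertex of `G1`. -/
def rmap (G1 G2 : BLG X) (v : ℕ) : ℕ :=
  if h : ∃ u, u ∈ G1.verts ∧ ∃ i, G2.bnd v = some i ∧ G1.bnd u = some i
  then 2 * Classical.choose h
  else 2 * v + 1

/-- The sum `G1 ⊕ G2`: disjoint union with boundary vertices of equal index identified. -/
def glue (G1 G2 : BLG X) : BLG X where
  verts := (fun v => 2 * v) '' G1.verts ∪ rmap G1 G2 '' G2.verts
  Adj a b :=
    (∃ u ∈ G1.verts, ∃ v ∈ G1.verts, G1.Adj u v ∧ a = 2 * u ∧ b = 2 * v) ∨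
    (∃ u ∈ G2.verts, ∃ v ∈ G2.verts, G2.Adj u v ∧ a = rmap G1 G2 u ∧ b = rmap G1 G2 v)
  label x := {l | (∃ v ∈ G1.verts, x = 2 * v ∧ l ∈ G1.label v) ∨
                  (∃ v ∈ G2.verts, x = rmap G1 G2 v ∧ l ∈ G2.label v)}
  bnd x :=
    if x ∈ (fun v => 2 * v) '' G1.verts ∪ rmap G1 G2 '' G2.verts then
      (if x % 2 = 0 then G1.bnd (x / 2) else G2.bnd (x / 2))
    else none

/-- One-vertex piece on vertex `v`, with boundary index `i` and labelset `L`. -/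
def singlePc (v i : ℕ) (L : Set X) : BLG X :=
  ⟨{v}, fun _ _ => False, fun x => if x = v then L else ∅,
   fun x => if x = v then some i else none⟩

/-- Two-vertex piece consisting of the single edge `{u,v}` with boundary indices `i`, `j`. -/
def edgePc (u v i j : ℕ) : BLG X :=
  ⟨{u, v}, fun a b => (a = u ∧ b = v) ∨ (a = v ∧ b = u), fun _ => ∅,
   fun x => if x = u then some i else if x = v then some j else none⟩

/-- The non-boundary vertices of `G`. -/
def interior (G : BLG X) : Set ℕ := {v | v ∈ G.verts ∧ G.bnd v = none}

/-- The piece of `G` corresponding to a connected component `C` of `G − δ(G)`: `C` together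
with its neighboring boundary vertices, with edges between boundary vertices removed and all
labels removed from boundary vertices. -/
def compPc (G : BLG X) (C : Set ℕ) : BLG X :=
  ⟨C ∪ {v | v ∈ G.verts ∧ G.bnd v ≠ none ∧ ∃ c ∈ C, G.Adj v c},
   fun a b => G.Adj a b ∧
     (a ∈ C ∪ {v | v ∈ G.verts ∧ G.bnd v ≠ none ∧ ∃ c ∈ C, G.Adj v c}) ∧
     (b ∈ C ∪ {v | v ∈ G.verts ∧ G.bnd v ≠ none ∧ ∃ c ∈ C, G.Adj v c}) ∧
     ¬(G.bnd a ≠ none ∧ G.bnd b ≠ none),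
   fun x => if x ∈ C then G.label x else ∅,
   fun x => if x ∈ C ∪ {v | v ∈ G.verts ∧ G.bnd v ≠ none ∧ ∃ c ∈ C, G.Adj v c}
            then G.bnd x else none⟩

/-- The set of pieces of `G`. -/
def pcs (G : BLG X) : Set (BLG X) :=
  {p | ∃ v ∈ G.verts, ∃ i, G.bnd v = some i ∧ p = singlePc v i (∅ : Set X)} ∪
  {p | ∃ v ∈ G.verts, ∃ i, G.bnd v = some i ∧ ∃ l ∈ G.label v, p = singlePc v i {l}} ∪
  {p | ∃ u v i j, G.Adj u v ∧ G.bnd u = some i ∧ G.bnd v = some j ∧ p = edgePc u v i j} ∪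
  {p | ∃ C, IsCompOf G (interior G) C ∧ p = compPc G C}

/-- The sum `⊕_{p ∈ P} p` of a set of pieces of a common graph; since pieces of a common
graph overlap exactly in boundary vertices (with equal indices), the sum is the union. -/
def unionOf (P : Set (BLG X)) : BLG X :=
  ⟨⋃ p ∈ P, p.verts,
   fun a b => ∃ p ∈ P, p.Adj a b,
   fun x => ⋃ p ∈ P, p.label x,
   fun x => if h : ∃ p, p ∈ P ∧ p.bnd x ≠ none then (Classical.choose h).bnd x else none⟩

/-- `mpcs(G)`: all sums of nonempty subsets of the pieces of `G`, up to isomorphism. -/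
def mpcs (G : BLG X) : Set (BLG X) :=
  {H | ∃ P ⊆ pcs G, P.Nonempty ∧ Iso H (unionOf P)}

/-- `mpcs` of a set of graphs. -/
def mpcsSet (S : Set (BLG X)) : Set (BLG X) := ⋃ G ∈ S, mpcs G

/-- Assign boundary index `i` to the vertex `v` of `G`. -/
def assignBnd (G : BLG X) (v i : ℕ) : BLG X :=
  ⟨G.verts, G.Adj, G.label, Function.update G.bnd v (some i)⟩

/-- Split the boundary vertex `u` of `G`: add a new vertex `w` with boundary index `i` and
the edge `{u,w}`, reattach the edges `{u,b}` with `ME b` to `w`, and move the labels `l` of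
`u` with `ML l` to `w`. -/
def splitVx (G : BLG X) (u w i : ℕ) (ME : ℕ → Prop) (ML : X → Prop) : BLG X :=
  ⟨insert w G.verts,
   fun a b =>
     (a = w ∧ b = u) ∨ (a = u ∧ b = w) ∨
     (a = w ∧ b ≠ w ∧ G.Adj u b ∧ ME b) ∨ (b = w ∧ a ≠ w ∧ G.Adj u a ∧ ME a) ∨
     (a ≠ w ∧ b ≠ w ∧ G.Adj a b ∧ ¬(a = u ∧ ME b) ∧ ¬(b = u ∧ ME a)),
   fun x => if x = w then {l | l ∈ G.label u ∧ ML l}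
            else if x = u then {l | l ∈ G.label u ∧ ¬ ML l}
            else G.label x,
   fun x => if x = w then some i else G.bnd x⟩

/-- One extension step turning a `t`-boundaried graph into a `(t+1)`-boundaried one (up to
isomorphism): keep the graph unchanged, assign index `t+1` to a non-boundary vertex, or
split a boundary vertex. -/
def ExtOne (t : ℕ) (H H' : BLG X) : Prop :=
  Iso H' H ∨
  (∃ v ∈ H.verts, H.bnd v = none ∧ Iso H' (assignBnd H v (t + 1))) ∨
  (∃ u ∈ H.verts, ∃ i, H.bnd u = some i ∧ ∃ w, w ∉ H.verts ∧
    ∃ ME : ℕ → Prop, ∃ ML : X → Prop, Iso H' (splitVx H u w (t + 1) ME ML))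

/-- `H' ∈ ext_{+k}(H)` for a `t`-boundaried graph `H`: `k` successive extension steps. -/
def ExtN (t : ℕ) : ℕ → BLG X → BLG X → Prop
  | 0, H, H' => Iso H' H
  | k + 1, H, H' => ∃ H'', ExtN t k H H'' ∧ ExtOne (t + k) H'' H'

/-- `ext_{+k}` of a set of `t`-boundaried graphs. -/
def extSet (t k : ℕ) (S : Set (BLG X)) : Set (BLG X) := {H' | ∃ H ∈ S, ExtN t k H H'}

/-- `mpcs_{+t}(S)` for a set `S` of unboundaried graphs. -/
def mpcsPlus (t : ℕ) (S : Set (BLG X)) : Set (BLG X) := mpcsSet (extSet 0 t S)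

/-- `forget(G,k)`: forget the boundary status of all boundary vertices with index `> k`. -/
def forget (G : BLG X) (k : ℕ) : BLG X :=
  ⟨G.verts, G.Adj, G.label, fun v => (G.bnd v).bind fun i => if i ≤ k then some i else none⟩

/-- Membership in a set of graphs, up to isomorphism. -/
def MemIso (H : BLG X) (S : Set (BLG X)) : Prop := ∃ H' ∈ S, Iso H H'

/-- `G1` and `G2` share no edge: no edge between boundary indices `i,j` occurs in both. -/
def EdgeDisjoint (G1 G2 : BLG X) : Prop :=
  ¬ ∃ i j, (∃ u v, G1.Adj u v ∧ G1.bnd u = some i ∧ G1.bnd v = some j) ∧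
           (∃ u v, G2.Adj u v ∧ G2.bnd u = some i ∧ G2.bnd v = some j)

/-- The merge `Π1 ⊙_F Π2`. -/
def Merge (F : Set (BLG X)) (t : ℕ) (P1 P2 : Set (BLG X)) : Set (BLG X) :=
  {G | G ∈ mpcsPlus t F ∧ ∀ G1 G2 : BLG X, G1.WF t → G2.WF t → EdgeDisjoint G1 G2 →
    Iso (glue G1 G2) G →
    (∃ H ∈ P1, Minor H G1) ∨ (∃ H ∈ P2, Minor H G2)}

/-- `(P1, P2) ∈ split_F(P)`: both contain `P`; for every `G ∈ P` and every subset `Y` of its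
pieces, the sum over `Y` was added to `P1` or the sum over the complement was added to `P2`;
and every member of `P1`/`P2` is accounted for by one of the two addition rules. -/
def SplitMem (F : Set (BLG X)) (t : ℕ) (P P1 P2 : Set (BLG X)) : Prop :=
  P ⊆ P1 ∧ P ⊆ P2 ∧
  (∀ G ∈ P, ∀ Y ⊆ pcs G, MemIso (unionOf Y) P1 ∨ MemIso (unionOf (pcs G \ Y)) P2) ∧
  (∀ H ∈ P1, H ∈ P ∨ (∃ G ∈ P, ∃ Y ⊆ pcs G, Iso H (unionOf Y)) ∨
    (H ∈ mpcsPlus t F ∧ ∃ H', Minor H' H ∧ MemIso H' P1)) ∧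
  (∀ H ∈ P2, H ∈ P ∨ (∃ G ∈ P, ∃ Y ⊆ pcs G, Iso H (unionOf Y)) ∨
    (H ∈ mpcsPlus t F ∧ ∃ H', Minor H' H ∧ MemIso H' P2))

/-- `folio*_{Q,t}(G)`: the boundaried labeled minors of `G` lying in `mpcs_{+t}(Q)`. -/
def folioStar (Q : Set (BLG X)) (t : ℕ) (G : BLG X) : Set (BLG X) :=
  {H | H ∈ mpcsPlus t Q ∧ Minor H G}

/-- The `(t+1)`-boundaried graphs in which boundary index `t+1` is assigned to a vertex. -/
def defBnd (t : ℕ) : Set (BLG X) := {G | ∃ v ∈ G.verts, G.bnd v = some t}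

/-! ### Auxiliary lemmas -/

lemma iso_refl (G : BLG X) : Iso G G :=
  ⟨id, Set.bijOn_id _, fun _ _ _ _ => Iff.rfl, fun _ _ => rfl, fun _ _ => rfl⟩

lemma reachIn_mono {G : BLG X} {S S' : Set ℕ} (hSS : S ⊆ S') {a b : ℕ}
    (h : ReachIn G S a b) : ReachIn G S' a b := by
  refine Relation.ReflTransGen.mono ?_ _ _ h
  exact fun x y hxy => ⟨hxy.1, hSS hxy.2.1, hSS hxy.2.2⟩

lemma reachIn_map {G G' : BLG X} {S S' : Set ℕ} (f : ℕ → ℕ)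
    (hstep : ∀ x y, G.Adj x y → x ∈ S → y ∈ S → G'.Adj (f x) (f y) ∧ f x ∈ S' ∧ f y ∈ S')
    {a b : ℕ} (h : ReachIn G S a b) : ReachIn G' S' (f a) (f b) := by
  exact Relation.ReflTransGen.lift f (fun x y (hxy : G.Adj x y ∧ x ∈ S ∧ y ∈ S) => hstep x y hxy.1 hxy.2.1 hxy.2.2) _ _ h

lemma reachIn_symm {G : BLG X} (hsym : ∀ u v, G.Adj u v → G.Adj v u) {S : Set ℕ} {a b : ℕ}
    (h : ReachIn G S a b) : ReachIn G S b a := by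
  refine (@Relation.ReflTransGen.stdSymm _ _ ⟨?_⟩).symm _ _ h
  exact fun x y hxy => ⟨hsym _ _ hxy.1, hxy.2.2, hxy.2.1⟩

/-- Transport of a minor along an isomorphism of the pattern. -/
lemma minor_iso {A H G : BLG Empty} (hiso : Iso A H) (hm : Minor A G) : Minor H G := by
  obtain ⟨f, hbij, hadj, _hlab, hbnd⟩ := hiso
  obtain ⟨φ, hφ⟩ := hm
  classical
  set g : ℕ → ℕ := Function.invFunOn f A.verts with hg
  have hinv : Set.InvOn g f A.verts H.verts := hbij.invOn_invFunOn
  have hgmem : ∀ w ∈ H.verts, g w ∈ A.verts := fun w hw => hbij.surjOn.mapsTo_invFunOn hw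
  have hfg : ∀ w ∈ H.verts, f (g w) = w := fun w hw => hinv.2 hw
  refine ⟨fun w => φ (g w), ?_, ?_, ?_, ?_, ?_, ?_, ?_, ?_⟩
  · exact fun w hw => hφ.sub _ (hgmem w hw)
  · exact fun w hw => hφ.nonempty _ (hgmem w hw)
  · exact fun w hw => hφ.conn _ (hgmem w hw)
  · intro u hu v hv huv
    refine hφ.disj _ (hgmem u hu) _ (hgmem v hv) ?_
    intro h; exact huv (by rw [← hfg u hu, ← hfg v hv, h])
  · intro u hu v hv hadjH
    refine hφ.edge _ (hgmem u hu) _ (hgmem v hv) ?_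
    rw [hadj _ (hgmem u hu) _ (hgmem v hv), hfg u hu, hfg v hv]; exact hadjH
  · intro w hw hb
    refine hφ.bnd_none _ (hgmem w hw) ?_
    rw [← hbnd _ (hgmem w hw), hfg w hw]; exact hb
  · intro w hw i hb
    refine hφ.bnd_some _ (hgmem w hw) i ?_
    rw [← hbnd _ (hgmem w hw), hfg w hw]; exact hb
  · intro w _ x; exact x.elim

/-! ### Lemmas about `glue` -/

lemma rmap_eq_of (G1 G2 : BLG X) (h1 : G1.WF t) {v u : ℕ} (hu : u ∈ G1.verts) {i : ℕ}
    (hv : G2.bnd v = some i) (hub : G1.bnd u = some i) : rmap G1 G2 v = 2 * u := by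
  have h : ∃ w, w ∈ G1.verts ∧ ∃ j, G2.bnd v = some j ∧ G1.bnd w = some j :=
    ⟨u, hu, i, hv, hub⟩
  rw [rmap, dif_pos h]
  obtain ⟨hw, j, hj1, hj2⟩ := Classical.choose_spec h
  rw [hv] at hj1
  obtain rfl : i = j := by injection hj1
  rw [h1.2.2.2.2.2.1 _ _ _ hj2 hub]

lemma rmap_eq_odd (G1 G2 : BLG X)
    {v : ℕ} (hv : ¬ ∃ u, u ∈ G1.verts ∧ ∃ i, G2.bnd v = some i ∧ G1.bnd u = some i) :
    rmap G1 G2 v = 2 * v + 1 := by rw [rmap, dif_neg hv]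

lemma rmap_cases (G1 G2 : BLG X) (v : ℕ) :
    (∃ u i, u ∈ G1.verts ∧ G2.bnd v = some i ∧ G1.bnd u = some i ∧ rmap G1 G2 v = 2 * u) ∨
    (rmap G1 G2 v = 2 * v + 1 ∧
      ¬ ∃ u, u ∈ G1.verts ∧ ∃ i, G2.bnd v = some i ∧ G1.bnd u = some i) := by
  by_cases h : ∃ u, u ∈ G1.verts ∧ ∃ i, G2.bnd v = some i ∧ G1.bnd u = some i
  · left
    obtain ⟨hw, j, hj1, hj2⟩ := Classical.choose_spec h
    exact ⟨Classical.choose h, j, hw, hj1, hj2, by rw [rmap, dif_pos h]⟩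
  · right; exact ⟨by rw [rmap, dif_neg h], h⟩

variable {t : ℕ} {G1 G2 : BLG X}

lemma mem_glue_left {u : ℕ} (hu : u ∈ G1.verts) : 2 * u ∈ (glue G1 G2).verts :=
  Or.inl ⟨u, hu, rfl⟩

lemma mem_glue_right {v : ℕ} (hv : v ∈ G2.verts) : rmap G1 G2 v ∈ (glue G1 G2).verts :=
  Or.inr ⟨v, hv, rfl⟩

lemma glue_bnd_left {u : ℕ} (hu : u ∈ G1.verts) : (glue G1 G2).bnd (2 * u) = G1.bnd u := by
  have hmem : 2 * u ∈ ((fun v => 2 * v) '' G1.verts ∪ rmap G1 G2 '' G2.verts) :=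
    mem_glue_left hu
  show (if 2 * u ∈ ((fun v => 2 * v) '' G1.verts ∪ rmap G1 G2 '' G2.verts) then
      (if 2 * u % 2 = 0 then G1.bnd (2 * u / 2) else G2.bnd (2 * u / 2)) else none) = G1.bnd u
  rw [if_pos hmem]
  simp [Nat.mul_mod_right, Nat.mul_div_cancel_left u (by norm_num : 0 < 2)]

lemma glue_bnd_right (h1 : G1.WF t) {v : ℕ} (hv : v ∈ G2.verts) :
    (glue G1 G2).bnd (rmap G1 G2 v) = G2.bnd v := by
  have hmem : rmap G1 G2 v ∈ ((fun v => 2 * v) '' G1.verts ∪ rmap G1 G2 '' G2.verts) :=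
    mem_glue_right hv
  show (if rmap G1 G2 v ∈ ((fun v => 2 * v) '' G1.verts ∪ rmap G1 G2 '' G2.verts) then
      (if rmap G1 G2 v % 2 = 0 then G1.bnd (rmap G1 G2 v / 2) else G2.bnd (rmap G1 G2 v / 2))
      else none) = G2.bnd v
  rw [if_pos hmem]
  rcases rmap_cases G1 G2 v with ⟨u, i, hu, hvi, hui, heq⟩ | ⟨heq, _⟩
  · rw [heq]
    simp only [Nat.mul_mod_right, Nat.mul_div_cancel_left u (by norm_num : 0 < 2)]
    simp [hui, hvi]
  · rw [heq]
    have h2 : (2 * v + 1) % 2 = 1 := by omega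
    have h3 : (2 * v + 1) / 2 = v := by omega
    rw [h2, h3]; simp

lemma glue_adj_left {u v : ℕ} (hu : u ∈ G1.verts) (hv : v ∈ G1.verts) (h : G1.Adj u v) :
    (glue G1 G2).Adj (2 * u) (2 * v) := Or.inl ⟨u, hu, v, hv, h, rfl, rfl⟩

lemma glue_adj_right {u v : ℕ} (hu : u ∈ G2.verts) (hv : v ∈ G2.verts) (h : G2.Adj u v) :
    (glue G1 G2).Adj (rmap G1 G2 u) (rmap G1 G2 v) := Or.inr ⟨u, hu, v, hv, h, rfl, rfl⟩

lemma double_eq_rmap_iff (h1 : G1.WF t) {a b : ℕ} (ha : a ∈ G1.verts) :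
    2 * a = rmap G1 G2 b ↔ ∃ i, G1.bnd a = some i ∧ G2.bnd b = some i := by
  constructor
  · intro h
    rcases rmap_cases G1 G2 b with ⟨u, i, hu, hvi, hui, heq⟩ | ⟨heq, _⟩
    · rw [heq] at h
      obtain rfl : a = u := by omega
      exact ⟨i, hui, hvi⟩
    · rw [heq] at h; omega
  · rintro ⟨i, hai, hbi⟩
    rw [rmap_eq_of G1 G2 h1 ha hbi hai]

lemma rmap_injOn (h1 : G1.WF t) (h2 : G2.WF t) {a b : ℕ}
    (ha : a ∈ G2.verts) (hb : b ∈ G2.verts) (h : rmap G1 G2 a = rmap G1 G2 b) : a = b := by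
  rcases rmap_cases G1 G2 a with ⟨u, i, hu, hai, hui, hea⟩ | ⟨hea, hna⟩ <;>
    rcases rmap_cases G1 G2 b with ⟨u', i', hu', hbi, hui', heb⟩ | ⟨heb, hnb⟩
  · rw [hea, heb] at h
    obtain rfl : u = u' := by omega
    rw [hui] at hui'
    obtain rfl : i = i' := by injection hui'
    exact h2.2.2.2.2.2.1 _ _ _ hai hbi
  · rw [hea, heb] at h; omega
  · rw [hea, heb] at h; omega
  · rw [hea, heb] at h; omega

lemma minor_glue_left {H : BLG Empty} {G1 G2 : BLG Empty} (hm : Minor H G1) :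
    Minor H (glue G1 G2) := by
  obtain ⟨φ, hφ⟩ := hm
  refine ⟨fun v => (fun x => 2 * x) '' φ v, ?_, ?_, ?_, ?_, ?_, ?_, ?_, ?_⟩
  · rintro v hv x ⟨a, ha, rfl⟩; exact mem_glue_left (hφ.sub v hv ha)
  · intro v hv; exact (hφ.nonempty v hv).image _
  · rintro v hv x ⟨a, ha, rfl⟩ y ⟨b, hb, rfl⟩
    refine reachIn_map _ ?_ (hφ.conn v hv a ha b hb)
    intro x y hxy hx hy
    exact ⟨glue_adj_left (hφ.sub v hv hx) (hφ.sub v hv hy) hxy,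
      ⟨x, hx, rfl⟩, ⟨y, hy, rfl⟩⟩
  · intro u hu v hv huv
    rw [Set.disjoint_left]
    rintro x ⟨a, ha, rfl⟩ ⟨b, hb, hba⟩
    obtain rfl : b = a := by simp only [] at hba; omega
    exact (hφ.disj u hu v hv huv).le_bot ⟨ha, hb⟩
  · intro u hu v hv h
    obtain ⟨a, ha, b, hb, hab⟩ := hφ.edge u hu v hv h
    exact ⟨2 * a, ⟨a, ha, rfl⟩, 2 * b, ⟨b, hb, rfl⟩,
      glue_adj_left (hφ.sub u hu ha) (hφ.sub v hv hb) hab⟩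
  · rintro v hv hb x ⟨a, ha, rfl⟩
    rw [glue_bnd_left (hφ.sub v hv ha)]
    exact hφ.bnd_none v hv hb a ha
  · intro v hv i hb
    obtain ⟨h3, a, ha, hai⟩ := hφ.bnd_some v hv i hb
    refine ⟨?_, 2 * a, ⟨a, ha, rfl⟩, ?_⟩
    · rintro x ⟨c, hc, rfl⟩
      rw [glue_bnd_left (hφ.sub v hv hc)]
      exact h3 c hc
    · rw [glue_bnd_left (hφ.sub v hv ha)]; exact hai
  · intro v _ x; exact x.elim

lemma minor_glue_right {H : BLG Empty} {G1 G2 : BLG Empty} {t : ℕ}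
    (h1 : G1.WF t) (h2 : G2.WF t) (hm : Minor H G2) : Minor H (glue G1 G2) := by
  obtain ⟨φ, hφ⟩ := hm
  refine ⟨fun v => rmap G1 G2 '' φ v, ?_, ?_, ?_, ?_, ?_, ?_, ?_, ?_⟩
  · rintro v hv x ⟨a, ha, rfl⟩; exact mem_glue_right (hφ.sub v hv ha)
  · intro v hv; exact (hφ.nonempty v hv).image _
  · rintro v hv x ⟨a, ha, rfl⟩ y ⟨b, hb, rfl⟩
    refine reachIn_map _ ?_ (hφ.conn v hv a ha b hb)
    intro x y hxy hx hy
    exact ⟨glue_adj_right (hφ.sub v hv hx) (hφ.sub v hv hy) hxy,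
      ⟨x, hx, rfl⟩, ⟨y, hy, rfl⟩⟩
  · intro u hu v hv huv
    rw [Set.disjoint_left]
    rintro x ⟨a, ha, rfl⟩ ⟨b, hb, hba⟩
    obtain rfl : b = a :=
      rmap_injOn h1 h2 (hφ.sub v hv hb) (hφ.sub u hu ha) hba
    exact (hφ.disj u hu v hv huv).le_bot ⟨ha, hb⟩
  · intro u hu v hv h
    obtain ⟨a, ha, b, hb, hab⟩ := hφ.edge u hu v hv h
    exact ⟨rmap G1 G2 a, ⟨a, ha, rfl⟩, rmap G1 G2 b, ⟨b, hb, rfl⟩,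
      glue_adj_right (hφ.sub u hu ha) (hφ.sub v hv hb) hab⟩
  · rintro v hv hb x ⟨a, ha, rfl⟩
    rw [glue_bnd_right h1 (hφ.sub v hv ha)]
    exact hφ.bnd_none v hv hb a ha
  · intro v hv i hb
    obtain ⟨h3, a, ha, hai⟩ := hφ.bnd_some v hv i hb
    refine ⟨?_, rmap G1 G2 a, ⟨a, ha, rfl⟩, ?_⟩
    · rintro x ⟨c, hc, rfl⟩
      rw [glue_bnd_right h1 (hφ.sub v hv hc)]
      exact h3 c hc
    · rw [glue_bnd_right h1 (hφ.sub v hv ha)]; exact hai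
  · intro v _ x; exact x.elim

/-! ### Lemmas about components, pieces and `unionOf` -/

/-- The connected component of `interior G` containing `w`. -/
def compOf (G : BLG X) (w : ℕ) : Set ℕ :=
  {x | x ∈ interior G ∧ ReachIn G (interior G) w x}

lemma isCompOf_compOf {G : BLG X} {w : ℕ} (hw : w ∈ interior G) :
    IsCompOf G (interior G) (compOf G w) := ⟨w, hw, rfl⟩

lemma mem_compOf_self {G : BLG X} {w : ℕ} (hw : w ∈ interior G) : w ∈ compOf G w :=
  ⟨hw, Relation.ReflTransGen.refl⟩

lemma isCompOf_eq {G : BLG X} (hsym : ∀ u v, G.Adj u v → G.Adj v u) {S C : Set ℕ}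
    (hC : IsCompOf G S C) {w : ℕ} (hw : w ∈ C) :
    C = {x | x ∈ S ∧ ReachIn G S w x} := by
  obtain ⟨v, hv, rfl⟩ := hC
  have hwv : ReachIn G S w v := reachIn_symm hsym hw.2
  ext x
  constructor
  · exact fun hx => ⟨hx.1, hwv.trans hx.2⟩
  · exact fun hx => ⟨hx.1, hw.2.trans hx.2⟩

lemma compOf_sub_interior {G : BLG X} {w : ℕ} : compOf G w ⊆ interior G := fun _ h => h.1

lemma isCompOf_sub {G : BLG X} {S C : Set ℕ} (hC : IsCompOf G S C) : C ⊆ S := by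
  obtain ⟨v, hv, rfl⟩ := hC; exact fun x hx => hx.1

lemma isCompOf_nonempty {G : BLG X} {S C : Set ℕ} (hC : IsCompOf G S C) : C.Nonempty := by
  obtain ⟨v, hv, rfl⟩ := hC; exact ⟨v, hv, Relation.ReflTransGen.refl⟩

lemma compPc_verts (G : BLG X) (C : Set ℕ) :
    (compPc G C).verts = C ∪ {v | v ∈ G.verts ∧ G.bnd v ≠ none ∧ ∃ c ∈ C, G.Adj v c} := rfl

lemma pcs_verts_sub {G : BLG X} {t : ℕ} (hG : G.WF t) {p : BLG X} (hp : p ∈ pcs G) :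
    p.verts ⊆ G.verts := by
  rcases hp with (((⟨v, hv, i, hb, rfl⟩ | ⟨v, hv, i, hb, l, hl, rfl⟩) |
    ⟨u, v, i, j, hadj, hbu, hbv, rfl⟩) | ⟨C, hC, rfl⟩)
  · rintro x (rfl : x ∈ ({v} : Set ℕ)); exact hv
  · rintro x (rfl : x ∈ ({v} : Set ℕ)); exact hv
  · rintro x hx
    rcases hx with rfl | rfl
    exacts [(hG.2.2.2.1 _ _ hadj).1, (hG.2.2.2.1 _ _ hadj).2]
  · rintro x (hx | hx)
    · exact (isCompOf_sub hC hx).1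
    · exact hx.1

lemma pcs_bnd_mem {G : BLG X} {t : ℕ} (hG : G.WF t) {p : BLG X} (hp : p ∈ pcs G) {x : ℕ}
    (hx : x ∈ p.verts) : p.bnd x = G.bnd x := by
  rcases hp with (((⟨v, hv, i, hb, rfl⟩ | ⟨v, hv, i, hb, l, hl, rfl⟩) |
    ⟨u, v, i, j, hadj, hbu, hbv, rfl⟩) | ⟨C, hC, rfl⟩)
  · obtain rfl : x = v := hx
    show (if x = x then some i else none) = G.bnd x
    rw [if_pos rfl, hb]
  · obtain rfl : x = v := hx
    show (if x = x then some i else none) = G.bnd x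
    rw [if_pos rfl, hb]
  · show (if x = u then some i else if x = v then some j else none) = G.bnd x
    rcases hx with rfl | rfl
    · rw [if_pos rfl, hbu]
    · by_cases hxu : x = u
      · rw [if_pos hxu, hxu, hbu]
      · rw [if_neg hxu, if_pos rfl, hbv]
  · exact if_pos hx

lemma pcs_bnd_not_mem {G : BLG X} {p : BLG X} (hp : p ∈ pcs G) {x : ℕ}
    (hx : x ∉ p.verts) : p.bnd x = none := by
  rcases hp with (((⟨v, hv, i, hb, rfl⟩ | ⟨v, hv, i, hb, l, hl, rfl⟩) |
    ⟨u, v, i, j, hadj, hbu, hbv, rfl⟩) | ⟨C, hC, rfl⟩)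
  · exact if_neg fun h => hx h
  · exact if_neg fun h => hx h
  · show (if x = u then some i else if x = v then some j else none) = none
    rw [if_neg (fun h : x = u => hx (Or.inl h)), if_neg (fun h : x = v => hx (Or.inr h))]
  · exact if_neg hx

lemma pcs_adj {G : BLG X} {t : ℕ} (hG : G.WF t) {p : BLG X} (hp : p ∈ pcs G) {a b : ℕ}
    (hab : p.Adj a b) : G.Adj a b ∧ a ∈ p.verts ∧ b ∈ p.verts := by
  rcases hp with (((⟨v, hv, i, hb, rfl⟩ | ⟨v, hv, i, hb, l, hl, rfl⟩) |
    ⟨u, v, i, j, hadj, hbu, hbv, rfl⟩) | ⟨C, hC, rfl⟩)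
  · exact absurd hab (fun h => h)
  · exact absurd hab (fun h => h)
  · rcases hab with ⟨rfl, rfl⟩ | ⟨rfl, rfl⟩
    · exact ⟨hadj, Or.inl rfl, Or.inr rfl⟩
    · exact ⟨hG.2.1 _ _ hadj, Or.inr rfl, Or.inl rfl⟩
  · exact ⟨hab.1, hab.2.1, hab.2.2.1⟩

lemma mem_pcs_single {G : BLG X} {v i : ℕ} (hv : v ∈ G.verts) (hb : G.bnd v = some i) :
    singlePc v i (∅ : Set X) ∈ pcs G :=
  Or.inl (Or.inl (Or.inl ⟨v, hv, i, hb, rfl⟩))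

lemma mem_pcs_edge {G : BLG X} {u v i j : ℕ} (hadj : G.Adj u v)
    (hbu : G.bnd u = some i) (hbv : G.bnd v = some j) : edgePc u v i j ∈ pcs G :=
  Or.inl (Or.inr ⟨u, v, i, j, hadj, hbu, hbv, rfl⟩)

lemma mem_pcs_comp {G : BLG X} {w : ℕ} (hw : w ∈ interior G) :
    compPc G (compOf G w) ∈ pcs G :=
  Or.inr ⟨compOf G w, isCompOf_compOf hw, rfl⟩

lemma interior_piece {G : BLG X} {t : ℕ} (hG : G.WF t) {p : BLG X} (hp : p ∈ pcs G) {x : ℕ}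
    (hx : x ∈ p.verts) (hbx : G.bnd x = none) :
    p = compPc G (compOf G x) ∧ x ∈ compOf G x := by
  have hxb : p.bnd x = none := by rw [pcs_bnd_mem hG hp hx, hbx]
  rcases hp with (((⟨v, hv, i, hb, rfl⟩ | ⟨v, hv, i, hb, l, hl, rfl⟩) |
    ⟨u, v, i, j, hadj, hbu, hbv, rfl⟩) | ⟨C, hC, rfl⟩)
  · obtain rfl : x = v := hx
    rw [hb] at hbx; exact absurd hbx (by simp)
  · obtain rfl : x = v := hx
    rw [hb] at hbx; exact absurd hbx (by simp)
  · rcases hx with rfl | rfl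
    · rw [hbu] at hbx; exact absurd hbx (by simp)
    · rw [hbv] at hbx; exact absurd hbx (by simp)
  · have hxC : x ∈ C := by
      rcases hx with hx | hx
      · exact hx
      · exact absurd hbx hx.2.1
    have hxint : x ∈ interior G := isCompOf_sub hC hxC
    have : C = compOf G x := isCompOf_eq hG.2.1 hC hxC
    rw [← this]
    exact ⟨rfl, this ▸ hxC⟩

lemma mem_unionOf_verts {P : Set (BLG X)} {x : ℕ} :
    x ∈ (unionOf P).verts ↔ ∃ p ∈ P, x ∈ p.verts := by
  simp [unionOf]

lemma unionOf_adj {P : Set (BLG X)} {a b : ℕ} :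
    (unionOf P).Adj a b ↔ ∃ p ∈ P, p.Adj a b := Iff.rfl

lemma unionOf_verts_sub {G : BLG X} {t : ℕ} (hG : G.WF t) {P : Set (BLG X)}
    (hP : P ⊆ pcs G) : (unionOf P).verts ⊆ G.verts := by
  intro x hx
  obtain ⟨p, hp, hxp⟩ := mem_unionOf_verts.1 hx
  exact pcs_verts_sub hG (hP hp) hxp

lemma unionOf_bnd_some {G : BLG X} {t : ℕ} (hG : G.WF t) {P : Set (BLG X)}
    (hP : P ⊆ pcs G) {p : BLG X} (hp : p ∈ P) {x i : ℕ} (hx : x ∈ p.verts)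
    (hi : G.bnd x = some i) : (unionOf P).bnd x = some i := by
  have hex : ∃ q, q ∈ P ∧ q.bnd x ≠ none := by
    refine ⟨p, hp, ?_⟩
    rw [pcs_bnd_mem hG (hP hp) hx, hi]; simp
  show (if h : ∃ q, q ∈ P ∧ q.bnd x ≠ none then (Classical.choose h).bnd x else none) = some i
  rw [dif_pos hex]
  obtain ⟨hq, hqb⟩ := Classical.choose_spec hex
  by_cases hxq : x ∈ (Classical.choose hex).verts
  · rw [pcs_bnd_mem hG (hP hq) hxq, hi]
  · exact absurd (pcs_bnd_not_mem (hP hq) hxq) hqb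

lemma unionOf_bnd_of_none {G : BLG X} {t : ℕ} (hG : G.WF t) {P : Set (BLG X)}
    (hP : P ⊆ pcs G) {x : ℕ} (hx : G.bnd x = none) : (unionOf P).bnd x = none := by
  have hex : ¬ ∃ q, q ∈ P ∧ q.bnd x ≠ none := by
    rintro ⟨q, hq, hqb⟩
    by_cases hxq : x ∈ q.verts
    · rw [pcs_bnd_mem hG (hP hq) hxq, hx] at hqb; exact hqb rfl
    · exact hqb (pcs_bnd_not_mem (hP hq) hxq)
  show (if h : ∃ q, q ∈ P ∧ q.bnd x ≠ none then (Classical.choose h).bnd x else none) = none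
  rw [dif_neg hex]

lemma unionOf_bnd_none {G : BLG X} {t : ℕ} (hG : G.WF t) {P : Set (BLG X)}
    (hP : P ⊆ pcs G) {x : ℕ} (hx : x ∈ (unionOf P).verts)
    (hb : (unionOf P).bnd x = none) : G.bnd x = none := by
  cases hbx : G.bnd x with
  | none => rfl
  | some i =>
    obtain ⟨p, hp, hxp⟩ := mem_unionOf_verts.1 hx
    rw [unionOf_bnd_some hG hP hp hxp hbx] at hb
    exact absurd hb (by simp)

lemma unionOf_bnd_some_elim {G : BLG X} {t : ℕ} (hG : G.WF t) {P : Set (BLG X)}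
    (hP : P ⊆ pcs G) {x i : ℕ} (hx : x ∈ (unionOf P).verts)
    (hb : (unionOf P).bnd x = some i) : G.bnd x = some i := by
  cases hbx : G.bnd x with
  | none => rw [unionOf_bnd_of_none hG hP hbx] at hb; exact absurd hb (by simp)
  | some j =>
    obtain ⟨p, hp, hxp⟩ := mem_unionOf_verts.1 hx
    rw [unionOf_bnd_some hG hP hp hxp hbx] at hb
    exact hb

/-- Every edge of `G` is an edge of some piece. -/
lemma edge_in_piece {G : BLG X} {t : ℕ} (hG : G.WF t) {a b : ℕ} (hab : G.Adj a b) :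
    ∃ p ∈ pcs G, p.Adj a b := by
  have ha : a ∈ G.verts := (hG.2.2.2.1 _ _ hab).1
  have hb : b ∈ G.verts := (hG.2.2.2.1 _ _ hab).2
  cases hba : G.bnd a with
  | none =>
    have haint : a ∈ interior G := ⟨ha, hba⟩
    refine ⟨compPc G (compOf G a), mem_pcs_comp haint, ?_⟩
    have haC : a ∈ compOf G a := mem_compOf_self haint
    have hbmem : b ∈ (compPc G (compOf G a)).verts := by
      cases hbb : G.bnd b with
      | none =>
        left
        exact ⟨⟨hb, hbb⟩, Relation.ReflTransGen.single ⟨hab, haint, hb, hbb⟩⟩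
      | some j =>
        right
        exact ⟨hb, by simp [hbb], a, haC, hG.2.1 _ _ hab⟩
    exact ⟨hab, Or.inl haC, hbmem, fun h => h.1 (by rw [hba])⟩
  | some i =>
    cases hbb : G.bnd b with
    | none =>
      have hbint : b ∈ interior G := ⟨hb, hbb⟩
      refine ⟨compPc G (compOf G b), mem_pcs_comp hbint, ?_⟩
      have hbC : b ∈ compOf G b := mem_compOf_self hbint
      have hamem : a ∈ (compPc G (compOf G b)).verts :=
        Or.inr ⟨ha, by simp [hba], b, hbC, hab⟩
      exact ⟨hab, hamem, Or.inl hbC, fun h => h.2 (by rw [hbb])⟩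
    | some j =>
      exact ⟨edgePc a b i j, mem_pcs_edge hab hba hbb, Or.inl ⟨rfl, rfl⟩⟩

/-- A vertex of `G` lies in some piece. -/
lemma vert_in_piece {G : BLG X} {t : ℕ} (hG : G.WF t) {w : ℕ} (hw : w ∈ G.verts) :
    ∃ p ∈ pcs G, w ∈ p.verts := by
  cases hbw : G.bnd w with
  | none =>
    exact ⟨compPc G (compOf G w), mem_pcs_comp ⟨hw, hbw⟩,
      Or.inl (mem_compOf_self ⟨hw, hbw⟩)⟩
  | some i =>
    exact ⟨singlePc w i (∅ : Set X), mem_pcs_single hw hbw, rfl⟩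

/-- Composition: minor models of complementary piece sums in the two summands combine to
a minor model of the whole graph in the sum. -/
lemma composition {t : ℕ} {G G1 G2 : BLG Empty} (hG : G.WF t) (h1 : G1.WF t) (h2 : G2.WF t)
    {Y : Set (BLG Empty)} (hY : Y ⊆ pcs G)
    (m1 : Minor (unionOf Y) G1) (m2 : Minor (unionOf (pcs G \ Y)) G2) :
    Minor G (glue G1 G2) := by
  obtain ⟨φ1, hφ1⟩ := m1
  obtain ⟨φ2, hφ2⟩ := m2
  have hYc : pcs G \ Y ⊆ pcs G := Set.diff_subset
  set A := unionOf Y with hA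
  set B := unionOf (pcs G \ Y) with hB
  set Φ : ℕ → Set ℕ := fun w =>
    {x | (w ∈ A.verts ∧ ∃ a ∈ φ1 w, x = 2 * a) ∨
         (w ∈ B.verts ∧ ∃ a ∈ φ2 w, x = rmap G1 G2 a)} with hΦ
  -- a vertex of `G` is in `A` or in `B`
  have cover : ∀ w ∈ G.verts, w ∈ A.verts ∨ w ∈ B.verts := by
    intro w hw
    obtain ⟨p, hp, hwp⟩ := vert_in_piece hG hw
    by_cases hpY : p ∈ Y
    · exact Or.inl (mem_unionOf_verts.2 ⟨p, hpY, hwp⟩)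
    · exact Or.inr (mem_unionOf_verts.2 ⟨p, ⟨hp, hpY⟩, hwp⟩)
  -- an interior vertex is not in both
  have huniq : ∀ w, G.bnd w = none → w ∈ A.verts → w ∈ B.verts → False := by
    intro w hbw hwA hwB
    obtain ⟨p1, hp1, hwp1⟩ := mem_unionOf_verts.1 hwA
    obtain ⟨p2, hp2, hwp2⟩ := mem_unionOf_verts.1 hwB
    have e1 := (interior_piece hG (hY hp1) hwp1 hbw).1
    have e2 := (interior_piece hG (hYc hp2) hwp2 hbw).1
    exact hp2.2 (by rw [e1, ← e2] at hp1; exact hp1)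
  -- boundary index transfer
  have bndA : ∀ w ∈ A.verts, ∀ i, G.bnd w = some i → A.bnd w = some i := by
    intro w hw i hi
    obtain ⟨p, hp, hwp⟩ := mem_unionOf_verts.1 hw
    exact unionOf_bnd_some hG hY hp hwp hi
  have bndB : ∀ w ∈ B.verts, ∀ i, G.bnd w = some i → B.bnd w = some i := by
    intro w hw i hi
    obtain ⟨p, hp, hwp⟩ := mem_unionOf_verts.1 hw
    exact unionOf_bnd_some hG hYc hp hwp hi
  -- elements of branch sets carry compatible boundary data
  have memA : ∀ w ∈ A.verts, ∀ a ∈ φ1 w, ∀ i, G1.bnd a = some i → G.bnd w = some i := by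
    intro w hw a ha i hai
    cases hbw : A.bnd w with
    | none => rw [hφ1.bnd_none w hw hbw a ha] at hai; exact absurd hai (by simp)
    | some j =>
      rcases (hφ1.bnd_some w hw j hbw).1 a ha with h | h
      · rw [h] at hai; exact absurd hai (by simp)
      · rw [h] at hai
        obtain rfl : j = i := by injection hai
        exact unionOf_bnd_some_elim hG hY hw hbw
  have memB : ∀ w ∈ B.verts, ∀ a ∈ φ2 w, ∀ i, G2.bnd a = some i → G.bnd w = some i := by
    intro w hw a ha i hai
    cases hbw : B.bnd w with
    | none => rw [hφ2.bnd_none w hw hbw a ha] at hai; exact absurd hai (by simp)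
    | some j =>
      rcases (hφ2.bnd_some w hw j hbw).1 a ha with h | h
      · rw [h] at hai; exact absurd hai (by simp)
      · rw [h] at hai
        obtain rfl : j = i := by injection hai
        exact unionOf_bnd_some_elim hG hYc hw hbw
  -- internal reachability of each half
  have reachL : ∀ w ∈ A.verts, ∀ a ∈ φ1 w, ∀ b ∈ φ1 w,
      ReachIn (glue G1 G2) (Φ w) (2 * a) (2 * b) := by
    intro w hw a ha b hb
    refine reachIn_map (fun x => 2 * x) ?_ (hφ1.conn w hw a ha b hb)
    intro x y hxy hx hy
    exact ⟨glue_adj_left (hφ1.sub w hw hx) (hφ1.sub w hw hy) hxy,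
      Or.inl ⟨hw, x, hx, rfl⟩, Or.inl ⟨hw, y, hy, rfl⟩⟩
  have reachR : ∀ w ∈ B.verts, ∀ a ∈ φ2 w, ∀ b ∈ φ2 w,
      ReachIn (glue G1 G2) (Φ w) (rmap G1 G2 a) (rmap G1 G2 b) := by
    intro w hw a ha b hb
    refine reachIn_map (rmap G1 G2) ?_ (hφ2.conn w hw a ha b hb)
    intro x y hxy hx hy
    exact ⟨glue_adj_right (hφ2.sub w hw hx) (hφ2.sub w hw hy) hxy,
      Or.inr ⟨hw, x, hx, rfl⟩, Or.inr ⟨hw, y, hy, rfl⟩⟩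
  refine ⟨Φ, ?_, ?_, ?_, ?_, ?_, ?_, ?_, ?_⟩
  · -- sub
    rintro w hw x (⟨hwA, a, ha, rfl⟩ | ⟨hwB, a, ha, rfl⟩)
    · exact mem_glue_left (hφ1.sub w hwA ha)
    · exact mem_glue_right (hφ2.sub w hwB ha)
  · -- nonempty
    intro w hw
    rcases cover w hw with hwA | hwB
    · obtain ⟨a, ha⟩ := hφ1.nonempty w hwA
      exact ⟨2 * a, Or.inl ⟨hwA, a, ha, rfl⟩⟩
    · obtain ⟨a, ha⟩ := hφ2.nonempty w hwB
      exact ⟨rmap G1 G2 a, Or.inr ⟨hwB, a, ha, rfl⟩⟩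
  · -- conn
    rintro w hw x (⟨hwA, a, ha, rfl⟩ | ⟨hwB, a, ha, rfl⟩) y
      (⟨hwA', b, hb, rfl⟩ | ⟨hwB', b, hb, rfl⟩)
    · exact reachL w hwA a ha b hb
    · -- cross: left to right
      cases hbw : G.bnd w with
      | none => exact absurd (huniq w hbw hwA hwB') id
      | some i =>
        obtain ⟨-, u1, hu1, hu1i⟩ := hφ1.bnd_some w hwA i (bndA w hwA i hbw)
        obtain ⟨-, u2, hu2, hu2i⟩ := hφ2.bnd_some w hwB' i (bndB w hwB' i hbw)
        have hbridge : rmap G1 G2 u2 = 2 * u1 :=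
          rmap_eq_of G1 G2 h1 (hφ1.sub w hwA hu1) hu2i hu1i
        have r1 := reachL w hwA a ha u1 hu1
        have r2 := reachR w hwB' u2 hu2 b hb
        rw [hbridge] at r2
        exact r1.trans r2
    · -- cross: right to left
      cases hbw : G.bnd w with
      | none => exact absurd (huniq w hbw hwA' hwB) id
      | some i =>
        obtain ⟨-, u1, hu1, hu1i⟩ := hφ1.bnd_some w hwA' i (bndA w hwA' i hbw)
        obtain ⟨-, u2, hu2, hu2i⟩ := hφ2.bnd_some w hwB i (bndB w hwB i hbw)
        have hbridge : rmap G1 G2 u2 = 2 * u1 :=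
          rmap_eq_of G1 G2 h1 (hφ1.sub w hwA' hu1) hu2i hu1i
        have r1 := reachR w hwB a ha u2 hu2
        have r2 := reachL w hwA' u1 hu1 b hb
        rw [← hbridge] at r2
        exact r1.trans r2
    · exact reachR w hwB a ha b hb
  · -- disj
    intro u hu v hv huv
    rw [Set.disjoint_left]
    rintro x (⟨huA, a, ha, rfl⟩ | ⟨huB, a, ha, rfl⟩)
      (⟨hvA, b, hb, hba⟩ | ⟨hvB, b, hb, hba⟩)
    · obtain rfl : b = a := by omega
      exact (hφ1.disj u huA v hvA huv).le_bot ⟨ha, hb⟩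
    · -- 2a = rmap b
      obtain ⟨i, hai, hbi⟩ := (double_eq_rmap_iff h1 (hφ1.sub u huA ha)).1 hba
      have g1 : G.bnd u = some i := memA u huA a ha i hai
      have g2 : G.bnd v = some i := memB v hvB b hb i hbi
      exact huv (hG.2.2.2.2.2.1 _ _ _ g1 g2)
    · obtain ⟨i, hbi, hai⟩ := (double_eq_rmap_iff h1 (hφ1.sub v hvA hb)).1 hba.symm
      have g1 : G.bnd v = some i := memA v hvA b hb i hbi
      have g2 : G.bnd u = some i := memB u huB a ha i hai
      exact huv (hG.2.2.2.2.2.1 _ _ _ g2 g1)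
    · obtain rfl : b = a :=
        rmap_injOn h1 h2 (hφ2.sub v hvB hb) (hφ2.sub u huB ha) hba.symm
      exact (hφ2.disj u huB v hvB huv).le_bot ⟨ha, hb⟩
  · -- edge
    intro u hu v hv huv
    obtain ⟨p, hp, hpadj⟩ := edge_in_piece hG huv
    obtain ⟨-, hup, hvp⟩ := pcs_adj hG hp hpadj
    by_cases hpY : p ∈ Y
    · have huA : u ∈ A.verts := mem_unionOf_verts.2 ⟨p, hpY, hup⟩
      have hvA : v ∈ A.verts := mem_unionOf_verts.2 ⟨p, hpY, hvp⟩
      obtain ⟨x, hx, y, hy, hxy⟩ := hφ1.edge u huA v hvA ⟨p, hpY, hpadj⟩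
      exact ⟨2 * x, Or.inl ⟨huA, x, hx, rfl⟩, 2 * y, Or.inl ⟨hvA, y, hy, rfl⟩,
        glue_adj_left (hφ1.sub u huA hx) (hφ1.sub v hvA hy) hxy⟩
    · have huB : u ∈ B.verts := mem_unionOf_verts.2 ⟨p, ⟨hp, hpY⟩, hup⟩
      have hvB : v ∈ B.verts := mem_unionOf_verts.2 ⟨p, ⟨hp, hpY⟩, hvp⟩
      obtain ⟨x, hx, y, hy, hxy⟩ := hφ2.edge u huB v hvB ⟨p, ⟨hp, hpY⟩, hpadj⟩
      exact ⟨rmap G1 G2 x, Or.inr ⟨huB, x, hx, rfl⟩, rmap G1 G2 y,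
        Or.inr ⟨hvB, y, hy, rfl⟩,
        glue_adj_right (hφ2.sub u huB hx) (hφ2.sub v hvB hy) hxy⟩
  · -- bnd_none
    rintro w hw hbw x (⟨hwA, a, ha, rfl⟩ | ⟨hwB, a, ha, rfl⟩)
    · rw [glue_bnd_left (hφ1.sub w hwA ha)]
      exact hφ1.bnd_none w hwA (unionOf_bnd_of_none hG hY hbw) a ha
    · rw [glue_bnd_right h1 (hφ2.sub w hwB ha)]
      exact hφ2.bnd_none w hwB (unionOf_bnd_of_none hG hYc hbw) a ha
  · -- bnd_some
    intro w hw i hbw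
    constructor
    · rintro x (⟨hwA, a, ha, rfl⟩ | ⟨hwB, a, ha, rfl⟩)
      · rw [glue_bnd_left (hφ1.sub w hwA ha)]
        exact (hφ1.bnd_some w hwA i (bndA w hwA i hbw)).1 a ha
      · rw [glue_bnd_right h1 (hφ2.sub w hwB ha)]
        exact (hφ2.bnd_some w hwB i (bndB w hwB i hbw)).1 a ha
    · rcases cover w hw with hwA | hwB
      · obtain ⟨-, u1, hu1, hu1i⟩ := hφ1.bnd_some w hwA i (bndA w hwA i hbw)
        exact ⟨2 * u1, Or.inl ⟨hwA, u1, hu1, rfl⟩,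
          by rw [glue_bnd_left (hφ1.sub w hwA hu1)]; exact hu1i⟩
      · obtain ⟨-, u2, hu2, hu2i⟩ := hφ2.bnd_some w hwB i (bndB w hwB i hbw)
        exact ⟨rmap G1 G2 u2, Or.inr ⟨hwB, u2, hu2, rfl⟩,
          by rw [glue_bnd_right h1 (hφ2.sub w hwB hu2)]; exact hu2i⟩
  · intro w _ x; exact x.elim

/-! ### Helpers for decomposition -/

lemma reach_stay {G : BLG X} {S T : Set ℕ}
    (hstep : ∀ x y, G.Adj x y → x ∈ S → y ∈ S → x ∈ T → y ∈ T)
    {a b : ℕ} (h : ReachIn G S a b) (ha : a ∈ T) : b ∈ T := by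
  induction h with
  | refl => exact ha
  | tail _ h2 ih => exact hstep _ _ h2.1 h2.2.1 h2.2.2 ih

lemma reach_project {GG Gm : BLG X} {S T T' : Set ℕ} {g : ℕ} (h : ℕ → ℕ)
    (hstep : ∀ x y, GG.Adj x y → x ∈ S → y ∈ S →
      (x ∈ T ∧ y ∈ T ∧ Gm.Adj (h x) (h y) ∧ h x ∈ T' ∧ h y ∈ T') ∨
      (x ∈ T ∧ y ∉ T ∧ x = g) ∨ (x ∉ T ∧ y ∈ T ∧ y = g) ∨ (x ∉ T ∧ y ∉ T))
    {a b : ℕ} (hab : ReachIn GG S a b) (hb : b ∈ T) :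
    (a ∈ T → ReachIn Gm T' (h a) (h b)) ∧ (a ∉ T → ReachIn Gm T' (h g) (h b)) := by
  induction hab using Relation.ReflTransGen.head_induction_on with
  | refl => exact ⟨fun _ => Relation.ReflTransGen.refl, fun hna => absurd hb hna⟩
  | head h' hcb ih =>
    obtain ⟨hadj, haS, hcS⟩ := h'
    rcases hstep _ _ hadj haS hcS with ⟨haT, hcT, hm, ha', hc'⟩ |
      ⟨haT, hcT, rfl⟩ | ⟨haT, hcT, rfl⟩ | ⟨haT, hcT⟩
    · exact ⟨fun _ => Relation.ReflTransGen.head ⟨hm, ha', hc'⟩ (ih.1 hcT),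
        fun hna => absurd haT hna⟩
    · exact ⟨fun _ => ih.2 hcT, fun hna => absurd haT hna⟩
    · exact ⟨fun haT' => absurd haT' haT, fun _ => ih.1 hcT⟩
    · exact ⟨fun haT' => absurd haT' haT, fun _ => ih.2 hcT⟩

variable {t : ℕ} {G1 G2 : BLG X}

/-- Vertices in both images of the sum carry a boundary index. -/
lemma shared_bnd (h1 : G1.WF t) {x : ℕ} (hx1 : x ∈ (fun v => 2 * v) '' G1.verts)
    (hx2 : x ∈ rmap G1 G2 '' G2.verts) : ∃ i, (glue G1 G2).bnd x = some i := by
  obtain ⟨u, hu, rfl⟩ := hx1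
  obtain ⟨v, hv, hveq⟩ := hx2
  obtain ⟨i, hui, hvi⟩ := (double_eq_rmap_iff h1 (G2 := G2) hu).1 hveq.symm
  exact ⟨i, by rw [glue_bnd_left hu]; exact hui⟩

lemma glue_adj_cases {x y : ℕ} (h : (glue G1 G2).Adj x y) :
    (∃ u v, u ∈ G1.verts ∧ v ∈ G1.verts ∧ G1.Adj u v ∧ x = 2 * u ∧ y = 2 * v) ∨
    (∃ u v, u ∈ G2.verts ∧ v ∈ G2.verts ∧ G2.Adj u v ∧
      x = rmap G1 G2 u ∧ y = rmap G1 G2 v) := by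
  rcases h with ⟨u, hu, v, hv, h, hx, hy⟩ | ⟨u, hu, v, hv, h, hx, hy⟩
  · exact Or.inl ⟨u, v, hu, hv, h, hx, hy⟩
  · exact Or.inr ⟨u, v, hu, hv, h, hx, hy⟩

lemma glue_bnd_elim (h1 : G1.WF t) {x i : ℕ} (hx : x ∈ (glue G1 G2).verts)
    (hb : (glue G1 G2).bnd x = some i) :
    (∃ u, u ∈ G1.verts ∧ x = 2 * u ∧ G1.bnd u = some i) ∨
    (∃ v, v ∈ G2.verts ∧ x = rmap G1 G2 v ∧ G2.bnd v = some i ∧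
      ¬ ∃ u, u ∈ G1.verts ∧ G1.bnd u = some i) := by
  rcases hx with ⟨u, hu, rfl⟩ | ⟨v, hv, rfl⟩
  · rw [glue_bnd_left hu] at hb
    exact Or.inl ⟨u, hu, rfl, hb⟩
  · rw [glue_bnd_right h1 hv] at hb
    rcases rmap_cases G1 G2 v with ⟨u, j, hu, hvj, huj, heq⟩ | ⟨heq, hno⟩
    · rw [hvj] at hb
      obtain rfl : j = i := by injection hb
      exact Or.inl ⟨u, hu, heq, huj⟩
    · refine Or.inr ⟨v, hv, rfl, hb, ?_⟩
      rintro ⟨u, hu, hui⟩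
      exact hno ⟨u, hu, i, hb, hui⟩

lemma glue_bnd_inj (h1 : G1.WF t) (h2 : G2.WF t) {x y i : ℕ}
    (hx : x ∈ (glue G1 G2).verts) (hy : y ∈ (glue G1 G2).verts)
    (hbx : (glue G1 G2).bnd x = some i) (hby : (glue G1 G2).bnd y = some i) : x = y := by
  rcases glue_bnd_elim h1 hx hbx with ⟨u, hu, rfl, hui⟩ | ⟨v, hv, rfl, hvi, hno⟩ <;>
    rcases glue_bnd_elim h1 hy hby with ⟨u', hu', rfl, hui'⟩ | ⟨v', hv', rfl, hvi', hno'⟩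
  · rw [h1.2.2.2.2.2.1 _ _ _ hui hui']
  · exact absurd ⟨u, hu, hui⟩ hno'
  · exact absurd ⟨u', hu', hui'⟩ hno
  · rw [h2.2.2.2.2.2.1 _ _ _ hvi hvi']

/-- Inverse of `rmap` on the image of `G2.verts`. -/
def rinv (G1 G2 : BLG X) (x : ℕ) : ℕ :=
  if h : ∃ v, v ∈ G2.verts ∧ rmap G1 G2 v = x then h.choose else 0

lemma rinv_rmap (h1 : G1.WF t) (h2 : G2.WF t) {v : ℕ} (hv : v ∈ G2.verts) :
    rinv G1 G2 (rmap G1 G2 v) = v := by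
  have h : ∃ w, w ∈ G2.verts ∧ rmap G1 G2 w = rmap G1 G2 v := ⟨v, hv, rfl⟩
  rw [rinv, dif_pos h]
  exact rmap_injOn h1 h2 h.choose_spec.1 hv h.choose_spec.2

/-- Decomposition: a minor model of `G` in `G1 ⊕ G2` splits the pieces of `G` into a part
that is a minor of `G1` and a complementary part that is a minor of `G2`. -/
lemma decomposition {t : ℕ} {G G1 G2 : BLG Empty} (hG : G.WF t) (h1 : G1.WF t)
    (h2 : G2.WF t) (hm : Minor G (glue G1 G2)) :
    ∃ Y ⊆ pcs G, Minor (unionOf Y) G1 ∧ Minor (unionOf (pcs G \ Y)) G2 := by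
  obtain ⟨φ, hφ⟩ := hm
  set I1 : Set ℕ := (fun v => 2 * v) '' G1.verts with hI1
  set I2 : Set ℕ := rmap G1 G2 '' G2.verts with hI2
  have hverts : ∀ {x : ℕ}, x ∈ (glue G1 G2).verts → x ∈ I1 ∨ x ∈ I2 := fun hx => hx
  set ψ1 : ℕ → Set ℕ := fun w => {u | u ∈ G1.verts ∧ 2 * u ∈ φ w} with hψ1
  set ψ2 : ℕ → Set ℕ := fun w => {v | v ∈ G2.verts ∧ rmap G1 G2 v ∈ φ w} with hψ2
  set Side1 : ℕ → Prop := fun w => ∀ x ∈ φ w, x ∈ I1 ∧ x ∉ I2 with hSide1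
  set Side2 : ℕ → Prop := fun w => ∀ x ∈ φ w, x ∈ I2 ∧ x ∉ I1 with hSide2
  -- purity of interior branch sets
  have hpure : ∀ w ∈ G.verts, G.bnd w = none → ∀ x ∈ φ w, ¬ (x ∈ I1 ∧ x ∈ I2) := by
    intro w hw hbw x hx ⟨hx1, hx2⟩
    obtain ⟨i, hi⟩ := shared_bnd h1 hx1 hx2
    rw [hφ.bnd_none w hw hbw x hx] at hi
    exact absurd hi (by simp)
  have hs1 : ∀ x y, (glue G1 G2).Adj x y → x ∈ I1 → x ∉ I2 → y ∈ I1 := by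
    intro x y hxy hx1 hx2
    rcases glue_adj_cases hxy with ⟨u, v, hu, hv, _, rfl, rfl⟩ |
      ⟨u, v, hu, hv, _, rfl, rfl⟩
    · exact ⟨v, hv, rfl⟩
    · exact absurd ⟨u, hu, rfl⟩ hx2
  have hs2 : ∀ x y, (glue G1 G2).Adj x y → x ∈ I2 → x ∉ I1 → y ∈ I2 := by
    intro x y hxy hx1 hx2
    rcases glue_adj_cases hxy with ⟨u, v, hu, hv, _, rfl, rfl⟩ |
      ⟨u, v, hu, hv, _, rfl, rfl⟩
    · exact absurd ⟨u, hu, rfl⟩ hx2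
    · exact ⟨v, hv, rfl⟩
  have side_all1 : ∀ w ∈ G.verts, G.bnd w = none → ∀ x0 ∈ φ w, x0 ∈ I1 → Side1 w := by
    intro w hw hbw x0 hx0 hx0I x hx
    have hx1 : x ∈ I1 := by
      refine reach_stay ?_ (hφ.conn w hw x0 hx0 x hx) hx0I
      intro a b hab haφ _ haI
      exact hs1 a b hab haI (fun hI2 => hpure w hw hbw a haφ ⟨haI, hI2⟩)
    exact ⟨hx1, fun hx2 => hpure w hw hbw x hx ⟨hx1, hx2⟩⟩
  have side_all2 : ∀ w ∈ G.verts, G.bnd w = none → ∀ x0 ∈ φ w, x0 ∈ I2 → Side2 w := by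
    intro w hw hbw x0 hx0 hx0I x hx
    have hx2 : x ∈ I2 := by
      refine reach_stay ?_ (hφ.conn w hw x0 hx0 x hx) hx0I
      intro a b hab haφ _ haI
      exact hs2 a b hab haI (fun hI1 => hpure w hw hbw a haφ ⟨hI1, haI⟩)
    exact ⟨hx2, fun hx1 => hpure w hw hbw x hx ⟨hx1, hx2⟩⟩
  have side_dichot : ∀ w ∈ G.verts, G.bnd w = none → Side1 w ∨ Side2 w := by
    intro w hw hbw
    obtain ⟨x0, hx0⟩ := hφ.nonempty w hw
    rcases hverts (hφ.sub w hw hx0) with h | h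
    · exact Or.inl (side_all1 w hw hbw x0 hx0 h)
    · exact Or.inr (side_all2 w hw hbw x0 hx0 h)
  have adj_side1 : ∀ w ∈ G.verts, ∀ w' ∈ G.verts, G.bnd w = none → G.bnd w' = none →
      G.Adj w w' → Side1 w → Side1 w' := by
    intro w hw w' hw' hbw hbw' hadj hside
    obtain ⟨x, hx, y, hy, hxy⟩ := hφ.edge w hw w' hw' hadj
    exact side_all1 w' hw' hbw' y hy (hs1 x y hxy (hside x hx).1 (hside x hx).2)
  have adj_side2 : ∀ w ∈ G.verts, ∀ w' ∈ G.verts, G.bnd w = none → G.bnd w' = none →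
      G.Adj w w' → Side2 w → Side2 w' := by
    intro w hw w' hw' hbw hbw' hadj hside
    obtain ⟨x, hx, y, hy, hxy⟩ := hφ.edge w hw w' hw' hadj
    exact side_all2 w' hw' hbw' y hy (hs2 x y hxy (hside x hx).1 (hside x hx).2)
  have comp_side : ∀ C, IsCompOf G (interior G) C →
      (∀ w ∈ C, Side1 w) ∨ (∀ w ∈ C, Side2 w) := by
    rintro C ⟨v, hv, rfl⟩
    rcases side_dichot v hv.1 hv.2 with h | h
    · left
      rintro w ⟨hwS, hreach⟩
      refine reach_stay (T := {z | Side1 z}) ?_ hreach h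
      intro a b hab haS hbS haside
      exact adj_side1 a haS.1 b hbS.1 haS.2 hbS.2 hab haside
    · right
      rintro w ⟨hwS, hreach⟩
      refine reach_stay (T := {z | Side2 z}) ?_ hreach h
      intro a b hab haS hbS haside
      exact adj_side2 a haS.1 b hbS.1 haS.2 hbS.2 hab haside
  -- boundary branch sets
  have bnd_M : ∀ w ∈ G.verts, ∀ i, G.bnd w = some i → ∀ x ∈ φ w, x ∈ I1 → x ∈ I2 →
      (glue G1 G2).bnd x = some i := by
    intro w hw i hbw x hx hx1 hx2
    obtain ⟨j, hj⟩ := shared_bnd h1 hx1 hx2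
    rcases (hφ.bnd_some w hw i hbw).1 x hx with h | h
    · rw [h] at hj; exact absurd hj (by simp)
    · exact h
  have stuck1 : ∀ w ∈ G.verts, ∀ i, G.bnd w = some i → ∀ g ∈ φ w,
      (glue G1 G2).bnd g = some i → g ∉ I1 → ∀ x ∈ φ w, x ∉ I1 := by
    intro w hw i hbw g hg hgb hgI x hx hxI
    have hgI2 : g ∈ I2 := (hverts (hφ.sub w hw hg)).resolve_left hgI
    have hfinal : x ∈ I2 ∧ x ∉ I1 := by
      refine reach_stay (T := {z | z ∈ I2 ∧ z ∉ I1}) ?_ (hφ.conn w hw g hg x hx) ⟨hgI2, hgI⟩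
      intro a b hab haφ hbφ ⟨haI2, haI1⟩
      have hbI2 : b ∈ I2 := hs2 a b hab haI2 haI1
      refine ⟨hbI2, fun hbI1 => ?_⟩
      have hbb := bnd_M w hw i hbw b hbφ hbI1 hbI2
      have : b = g := glue_bnd_inj h1 h2 (hφ.sub w hw hbφ) (hφ.sub w hw hg) hbb hgb
      exact hgI (this ▸ hbI1)
    exact hfinal.2 hxI
  have stuck2 : ∀ w ∈ G.verts, ∀ i, G.bnd w = some i → ∀ g ∈ φ w,
      (glue G1 G2).bnd g = some i → g ∉ I2 → ∀ x ∈ φ w, x ∉ I2 := by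
    intro w hw i hbw g hg hgb hgI x hx hxI
    have hgI1 : g ∈ I1 := (hverts (hφ.sub w hw hg)).resolve_right hgI
    have hfinal : x ∈ I1 ∧ x ∉ I2 := by
      refine reach_stay (T := {z | z ∈ I1 ∧ z ∉ I2}) ?_ (hφ.conn w hw g hg x hx) ⟨hgI1, hgI⟩
      intro a b hab haφ hbφ ⟨haI1, haI2⟩
      have hbI1 : b ∈ I1 := hs1 a b hab haI1 haI2
      refine ⟨hbI1, fun hbI2 => ?_⟩
      have hbb := bnd_M w hw i hbw b hbφ hbI1 hbI2
      have : b = g := glue_bnd_inj h1 h2 (hφ.sub w hw hbφ) (hφ.sub w hw hg) hbb hgb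
      exact hgI (this ▸ hbI2)
    exact hfinal.2 hxI
  have witness1 : ∀ w ∈ G.verts, ∀ i, G.bnd w = some i →
      (∃ u ∈ ψ1 w, G1.bnd u = some i) ∨ (∀ x ∈ φ w, x ∉ I1) := by
    intro w hw i hbw
    obtain ⟨g, hg, hgb⟩ := (hφ.bnd_some w hw i hbw).2
    by_cases hgI : g ∈ I1
    · obtain ⟨u, hu, rfl⟩ := hgI
      rw [glue_bnd_left hu] at hgb
      exact Or.inl ⟨u, ⟨hu, hg⟩, hgb⟩
    · exact Or.inr (stuck1 w hw i hbw g hg hgb hgI)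
  have witness2 : ∀ w ∈ G.verts, ∀ i, G.bnd w = some i →
      (∃ v ∈ ψ2 w, G2.bnd v = some i) ∨ (∀ x ∈ φ w, x ∉ I2) := by
    intro w hw i hbw
    obtain ⟨g, hg, hgb⟩ := (hφ.bnd_some w hw i hbw).2
    by_cases hgI : g ∈ I2
    · obtain ⟨v, hv, rfl⟩ := hgI
      rw [glue_bnd_right h1 hv] at hgb
      exact Or.inl ⟨v, ⟨hv, hg⟩, hgb⟩
    · exact Or.inr (stuck2 w hw i hbw g hg hgb hgI)
  -- the two suitability conditions and the dichotomy
  set Cond1 : BLG Empty → Prop := fun p =>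
    (∀ w ∈ p.verts, G.bnd w = none → Side1 w) ∧
    (∀ w ∈ p.verts, ∀ i, G.bnd w = some i → ∃ u ∈ ψ1 w, G1.bnd u = some i) ∧
    (∀ a b, p.Adj a b → ∃ u ∈ ψ1 a, ∃ v ∈ ψ1 b, G1.Adj u v) with hCond1
  set Cond2 : BLG Empty → Prop := fun p =>
    (∀ w ∈ p.verts, G.bnd w = none → Side2 w) ∧
    (∀ w ∈ p.verts, ∀ i, G.bnd w = some i → ∃ v ∈ ψ2 w, G2.bnd v = some i) ∧
    (∀ a b, p.Adj a b → ∃ u ∈ ψ2 a, ∃ v ∈ ψ2 b, G2.Adj u v) with hCond2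
  have dichot : ∀ p ∈ pcs G, Cond1 p ∨ Cond2 p := by
    intro p hp
    rcases hp with (((⟨v, hv, i, hb, rfl⟩ | ⟨v, hv, i, hb, l, hl, rfl⟩) |
      ⟨u, v, i, j, hadj, hbu, hbv, rfl⟩) | ⟨C, hC, rfl⟩)
    · -- single-vertex piece
      rcases witness1 v hv i hb with ⟨u, hu, hui⟩ | hall
      · left
        refine ⟨?_, ?_, ?_⟩
        · intro w hw hbw
          obtain rfl : w = v := hw
          rw [hb] at hbw; exact absurd hbw (by simp)
        · intro w hw i' hbw
          obtain rfl : w = v := hw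
          rw [hb] at hbw
          obtain rfl : i = i' := by injection hbw
          exact ⟨u, hu, hui⟩
        · intro a b hab; exact absurd hab (fun h => h)
      · right
        refine ⟨?_, ?_, ?_⟩
        · intro w hw hbw
          obtain rfl : w = v := hw
          rw [hb] at hbw; exact absurd hbw (by simp)
        · intro w hw i' hbw
          obtain rfl : w = v := hw
          rw [hb] at hbw
          obtain rfl : i = i' := by injection hbw
          rcases witness2 w hv i hb with h | hall2
          · exact h
          · obtain ⟨x, hx⟩ := hφ.nonempty w hv
            rcases hverts (hφ.sub w hv hx) with h | h
            · exact absurd h (hall x hx)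
            · exact absurd h (hall2 x hx)
        · intro a b hab; exact absurd hab (fun h => h)
    · exact l.elim
    · -- edge piece
      have hu' : u ∈ G.verts := (hG.2.2.2.1 _ _ hadj).1
      have hv' : v ∈ G.verts := (hG.2.2.2.1 _ _ hadj).2
      obtain ⟨x, hx, y, hy, hxy⟩ := hφ.edge u hu' v hv' hadj
      rcases glue_adj_cases hxy with ⟨a, b, ha, hb', hadj1, rfl, rfl⟩ |
        ⟨a, b, ha, hb', hadj2, rfl, rfl⟩
      · left
        refine ⟨?_, ?_, ?_⟩
        · intro w hw hbw
          rcases hw with rfl | rfl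
          · rw [hbu] at hbw; exact absurd hbw (by simp)
          · rw [hbv] at hbw; exact absurd hbw (by simp)
        · intro w hw i' hbw
          rcases hw with rfl | rfl
          · rcases witness1 w hu' i' hbw with h | hall
            · exact h
            · exact absurd ⟨a, ha, rfl⟩ (hall _ hx)
          · rcases witness1 w hv' i' hbw with h | hall
            · exact h
            · exact absurd ⟨b, hb', rfl⟩ (hall _ hy)
        · rintro a' b' (⟨rfl, rfl⟩ | ⟨rfl, rfl⟩)
          · exact ⟨a, ⟨ha, hx⟩, b, ⟨hb', hy⟩, hadj1⟩
          · exact ⟨b, ⟨hb', hy⟩, a, ⟨ha, hx⟩, h1.2.1 _ _ hadj1⟩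
      · right
        refine ⟨?_, ?_, ?_⟩
        · intro w hw hbw
          rcases hw with rfl | rfl
          · rw [hbu] at hbw; exact absurd hbw (by simp)
          · rw [hbv] at hbw; exact absurd hbw (by simp)
        · intro w hw i' hbw
          rcases hw with rfl | rfl
          · rcases witness2 w hu' i' hbw with h | hall
            · exact h
            · exact absurd ⟨a, ha, rfl⟩ (hall _ hx)
          · rcases witness2 w hv' i' hbw with h | hall
            · exact h
            · exact absurd ⟨b, hb', rfl⟩ (hall _ hy)
        · rintro a' b' (⟨rfl, rfl⟩ | ⟨rfl, rfl⟩)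
          · exact ⟨a, ⟨ha, hx⟩, b, ⟨hb', hy⟩, hadj2⟩
          · exact ⟨b, ⟨hb', hy⟩, a, ⟨ha, hx⟩, h2.2.1 _ _ hadj2⟩
    · -- component piece
      have hCsub : C ⊆ interior G := isCompOf_sub hC
      rcases comp_side C hC with hside | hside
      · left
        refine ⟨?_, ?_, ?_⟩
        · intro w hw hbw
          rcases hw with hw | hw
          · exact hside w hw
          · exact absurd hbw hw.2.1
        · intro w hw i hbw
          rcases hw with hw | hw
          · exact absurd hbw (by rw [(hCsub hw).2]; simp)
          · obtain ⟨hwG, _, c, hcC, hadjwc⟩ := hw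
            have hcG : c ∈ G.verts := (hCsub hcC).1
            obtain ⟨x, hx, y, hy, hxy⟩ := hφ.edge w hwG c hcG hadjwc
            rcases glue_adj_cases hxy with ⟨a, b, ha, hb', _, rfl, rfl⟩ |
              ⟨a, b, ha, hb', _, rfl, rfl⟩
            · rcases witness1 w hwG i hbw with h | hall
              · exact h
              · exact absurd ⟨a, ha, rfl⟩ (hall _ hx)
            · exact absurd ⟨b, hb', rfl⟩ (hside c hcC _ hy).2
        · rintro a b ⟨hGab, hav, hbv, hnb⟩
          obtain ⟨x, hx, y, hy, hxy⟩ := hφ.edge a (pcs_verts_sub hG (Or.inr ⟨C, hC, rfl⟩) hav)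
            b (pcs_verts_sub hG (Or.inr ⟨C, hC, rfl⟩) hbv) hGab
          rcases glue_adj_cases hxy with ⟨a', b', ha', hb', hadj1, rfl, rfl⟩ |
            ⟨a', b', ha', hb', hadj2, rfl, rfl⟩
          · exact ⟨a', ⟨ha', hx⟩, b', ⟨hb', hy⟩, hadj1⟩
          · -- one endpoint is interior and on side 1: contradiction
            exfalso
            cases hba : G.bnd a with
            | none =>
              have haC : a ∈ C := by
                rcases hav with h | h
                · exact h
                · exact absurd hba h.2.1
              exact (hside a haC _ hx).2 ⟨a', ha', rfl⟩
            | some k =>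
              have hbb : G.bnd b = none := by
                cases hbb : G.bnd b with
                | none => rfl
                | some k' => exact absurd ⟨by rw [hba]; simp, by rw [hbb]; simp⟩ hnb
              have hbC : b ∈ C := by
                rcases hbv with h | h
                · exact h
                · exact absurd hbb h.2.1
              exact (hside b hbC _ hy).2 ⟨b', hb', rfl⟩
      · right
        refine ⟨?_, ?_, ?_⟩
        · intro w hw hbw
          rcases hw with hw | hw
          · exact hside w hw
          · exact absurd hbw hw.2.1
        · intro w hw i hbw
          rcases hw with hw | hw
          · exact absurd hbw (by rw [(hCsub hw).2]; simp)
          · obtain ⟨hwG, _, c, hcC, hadjwc⟩ := hw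
            have hcG : c ∈ G.verts := (hCsub hcC).1
            obtain ⟨x, hx, y, hy, hxy⟩ := hφ.edge w hwG c hcG hadjwc
            rcases glue_adj_cases hxy with ⟨a, b, ha, hb', _, rfl, rfl⟩ |
              ⟨a, b, ha, hb', _, rfl, rfl⟩
            · exact absurd ⟨b, hb', rfl⟩ (hside c hcC _ hy).2
            · rcases witness2 w hwG i hbw with h | hall
              · exact h
              · exact absurd ⟨a, ha, rfl⟩ (hall _ hx)
        · rintro a b ⟨hGab, hav, hbv, hnb⟩
          obtain ⟨x, hx, y, hy, hxy⟩ := hφ.edge a (pcs_verts_sub hG (Or.inr ⟨C, hC, rfl⟩) hav)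
            b (pcs_verts_sub hG (Or.inr ⟨C, hC, rfl⟩) hbv) hGab
          rcases glue_adj_cases hxy with ⟨a', b', ha', hb', hadj1, rfl, rfl⟩ |
            ⟨a', b', ha', hb', hadj2, rfl, rfl⟩
          · exfalso
            cases hba : G.bnd a with
            | none =>
              have haC : a ∈ C := by
                rcases hav with h | h
                · exact h
                · exact absurd hba h.2.1
              exact (hside a haC _ hx).2 ⟨a', ha', rfl⟩
            | some k =>
              have hbb : G.bnd b = none := by
                cases hbb : G.bnd b with
                | none => rfl
                | some k' => exact absurd ⟨by rw [hba]; simp, by rw [hbb]; simp⟩ hnb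
              have hbC : b ∈ C := by
                rcases hbv with h | h
                · exact h
                · exact absurd hbb h.2.1
              exact (hside b hbC _ hy).2 ⟨b', hb', rfl⟩
          · exact ⟨a', ⟨ha', hx⟩, b', ⟨hb', hy⟩, hadj2⟩
  -- the split and the two models
  classical
  set Y : Set (BLG Empty) := {p | p ∈ pcs G ∧ Cond1 p} with hYdef
  have hYsub : Y ⊆ pcs G := fun p hp => hp.1
  have hYc : pcs G \ Y ⊆ pcs G := Set.diff_subset
  have cond2_of : ∀ p ∈ pcs G \ Y, Cond2 p := by
    intro p hp
    rcases dichot p hp.1 with h | h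
    · exact absurd ⟨hp.1, h⟩ hp.2
    · exact h
  have hAsub : (unionOf Y).verts ⊆ G.verts := unionOf_verts_sub hG hYsub
  have hBsub : (unionOf (pcs G \ Y)).verts ⊆ G.verts := unionOf_verts_sub hG hYc
  have hMgen : ∀ w ∈ G.verts, ∃ g, ∀ x ∈ φ w, x ∈ I1 → x ∈ I2 → x = g := by
    intro w hwG
    cases hbw : G.bnd w with
    | none => exact ⟨0, fun x hx h1' h2' => absurd ⟨h1', h2'⟩ (hpure w hwG hbw x hx)⟩
    | some i =>
      obtain ⟨g, hg, hgb⟩ := (hφ.bnd_some w hwG i hbw).2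
      exact ⟨g, fun x hx hx1 hx2 => glue_bnd_inj h1 h2 (hφ.sub w hwG hx)
        (hφ.sub w hwG hg) (bnd_M w hwG i hbw x hx hx1 hx2) hgb⟩
  have conn1 : ∀ w ∈ G.verts, ∀ a ∈ ψ1 w, ∀ b ∈ ψ1 w, ReachIn G1 (ψ1 w) a b := by
    intro w hwG a ha b hb
    obtain ⟨g, hMg⟩ := hMgen w hwG
    have hstep : ∀ x y, (glue G1 G2).Adj x y → x ∈ φ w → y ∈ φ w →
        (x ∈ I1 ∧ y ∈ I1 ∧ G1.Adj (x / 2) (y / 2) ∧ x / 2 ∈ ψ1 w ∧ y / 2 ∈ ψ1 w) ∨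
        (x ∈ I1 ∧ y ∉ I1 ∧ x = g) ∨ (x ∉ I1 ∧ y ∈ I1 ∧ y = g) ∨ (x ∉ I1 ∧ y ∉ I1) := by
      intro x y hxy hxφ hyφ
      by_cases hxI : x ∈ I1 <;> by_cases hyI : y ∈ I1
      · rcases glue_adj_cases hxy with ⟨u, v, hu, hv, hadj1, rfl, rfl⟩ |
          ⟨u, v, hu, hv, hadj2, rfl, rfl⟩
        · refine Or.inl ⟨hxI, hyI, ?_, ?_, ?_⟩
          · have eu : 2 * u / 2 = u := by omega
            have ev : 2 * v / 2 = v := by omega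
            rw [eu, ev]; exact hadj1
          · have eu : 2 * u / 2 = u := by omega
            rw [eu]; exact ⟨hu, hxφ⟩
          · have ev : 2 * v / 2 = v := by omega
            rw [ev]; exact ⟨hv, hyφ⟩
        · exfalso
          have e1 := hMg _ hxφ hxI ⟨u, hu, rfl⟩
          have e2 := hMg _ hyφ hyI ⟨v, hv, rfl⟩
          have huv : u = v := rmap_injOn h1 h2 hu hv (e1.trans e2.symm)
          exact h2.2.2.1 u (huv ▸ hadj2)
      · rcases glue_adj_cases hxy with ⟨u, v, hu, hv, _, rfl, rfl⟩ |
          ⟨u, v, hu, hv, _, rfl, rfl⟩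
        · exact absurd ⟨v, hv, rfl⟩ hyI
        · exact Or.inr (Or.inl ⟨hxI, hyI, hMg _ hxφ hxI ⟨u, hu, rfl⟩⟩)
      · rcases glue_adj_cases hxy with ⟨u, v, hu, hv, _, rfl, rfl⟩ |
          ⟨u, v, hu, hv, _, rfl, rfl⟩
        · exact absurd ⟨u, hu, rfl⟩ hxI
        · exact Or.inr (Or.inr (Or.inl ⟨hxI, hyI, hMg _ hyφ hyI ⟨v, hv, rfl⟩⟩))
      · exact Or.inr (Or.inr (Or.inr ⟨hxI, hyI⟩))
    have hres := (reach_project (g := g) (fun x => x / 2) hstep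
      (hφ.conn w hwG (2 * a) ha.2 (2 * b) hb.2) ⟨b, hb.1, rfl⟩).1 ⟨a, ha.1, rfl⟩
    have ea : 2 * a / 2 = a := by omega
    have eb : 2 * b / 2 = b := by omega
    rwa [ea, eb] at hres
  have conn2 : ∀ w ∈ G.verts, ∀ a ∈ ψ2 w, ∀ b ∈ ψ2 w, ReachIn G2 (ψ2 w) a b := by
    intro w hwG a ha b hb
    obtain ⟨g, hMg⟩ := hMgen w hwG
    have hstep : ∀ x y, (glue G1 G2).Adj x y → x ∈ φ w → y ∈ φ w →
        (x ∈ I2 ∧ y ∈ I2 ∧ G2.Adj (rinv G1 G2 x) (rinv G1 G2 y) ∧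
          rinv G1 G2 x ∈ ψ2 w ∧ rinv G1 G2 y ∈ ψ2 w) ∨
        (x ∈ I2 ∧ y ∉ I2 ∧ x = g) ∨ (x ∉ I2 ∧ y ∈ I2 ∧ y = g) ∨ (x ∉ I2 ∧ y ∉ I2) := by
      intro x y hxy hxφ hyφ
      by_cases hxI : x ∈ I2 <;> by_cases hyI : y ∈ I2
      · rcases glue_adj_cases hxy with ⟨u, v, hu, hv, hadj1, rfl, rfl⟩ |
          ⟨u, v, hu, hv, hadj2, rfl, rfl⟩
        · exfalso
          have e1 := hMg _ hxφ ⟨u, hu, rfl⟩ hxI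
          have e2 := hMg _ hyφ ⟨v, hv, rfl⟩ hyI
          have huv : u = v := by omega
          exact h1.2.2.1 u (huv ▸ hadj1)
        · refine Or.inl ⟨hxI, hyI, ?_, ?_, ?_⟩
          · rw [rinv_rmap h1 h2 hu, rinv_rmap h1 h2 hv]; exact hadj2
          · rw [rinv_rmap h1 h2 hu]; exact ⟨hu, hxφ⟩
          · rw [rinv_rmap h1 h2 hv]; exact ⟨hv, hyφ⟩
      · rcases glue_adj_cases hxy with ⟨u, v, hu, hv, _, rfl, rfl⟩ |
          ⟨u, v, hu, hv, _, rfl, rfl⟩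
        · exact Or.inr (Or.inl ⟨hxI, hyI, hMg _ hxφ ⟨u, hu, rfl⟩ hxI⟩)
        · exact absurd ⟨v, hv, rfl⟩ hyI
      · rcases glue_adj_cases hxy with ⟨u, v, hu, hv, _, rfl, rfl⟩ |
          ⟨u, v, hu, hv, _, rfl, rfl⟩
        · exact Or.inr (Or.inr (Or.inl ⟨hxI, hyI, hMg _ hyφ ⟨v, hv, rfl⟩ hyI⟩))
        · exact absurd ⟨u, hu, rfl⟩ hxI
      · exact Or.inr (Or.inr (Or.inr ⟨hxI, hyI⟩))
    have hres := (reach_project (g := g) (rinv G1 G2) hstep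
      (hφ.conn w hwG (rmap G1 G2 a) ha.2 (rmap G1 G2 b) hb.2)
      ⟨b, hb.1, rfl⟩).1 ⟨a, ha.1, rfl⟩
    rwa [rinv_rmap h1 h2 ha.1, rinv_rmap h1 h2 hb.1] at hres
  refine ⟨Y, hYsub, ⟨ψ1, ?_, ?_, ?_, ?_, ?_, ?_, ?_, ?_⟩,
    ⟨ψ2, ?_, ?_, ?_, ?_, ?_, ?_, ?_, ?_⟩⟩
  · exact fun w _ u hu => hu.1
  · intro w hw
    obtain ⟨p, hpY, hwp⟩ := mem_unionOf_verts.1 hw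
    cases hbw : G.bnd w with
    | none =>
      obtain ⟨x, hx⟩ := hφ.nonempty w (hAsub hw)
      obtain ⟨u, hu, rfl⟩ := (hpY.2.1 w hwp hbw x hx).1
      exact ⟨u, hu, hx⟩
    | some i =>
      obtain ⟨u, hu, _⟩ := hpY.2.2.1 w hwp i hbw
      exact ⟨u, hu⟩
  · exact fun w hw => conn1 w (hAsub hw)
  · intro u hu v hv huv
    rw [Set.disjoint_left]
    rintro x ⟨hxG1, hxφ⟩ ⟨_, hxφ'⟩
    exact (hφ.disj u (hAsub hu) v (hAsub hv) huv).le_bot ⟨hxφ, hxφ'⟩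
  · rintro u _ v _ ⟨p, hpY, hpadj⟩
    exact hpY.2.2.2 u v hpadj
  · intro w hw hbw u hu
    have hGb := unionOf_bnd_none hG hYsub hw hbw
    have h' := hφ.bnd_none w (hAsub hw) hGb _ hu.2
    rwa [glue_bnd_left hu.1] at h'
  · intro w hw i hbw
    have hGb := unionOf_bnd_some_elim hG hYsub hw hbw
    constructor
    · intro u hu
      have h' := (hφ.bnd_some w (hAsub hw) i hGb).1 _ hu.2
      rwa [glue_bnd_left hu.1] at h'
    · obtain ⟨p, hpY, hwp⟩ := mem_unionOf_verts.1 hw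
      exact hpY.2.2.1 w hwp i hGb
  · intro w _ x; exact x.elim
  · exact fun w _ u hu => hu.1
  · intro w hw
    obtain ⟨p, hpB, hwp⟩ := mem_unionOf_verts.1 hw
    have hc2 := cond2_of p hpB
    cases hbw : G.bnd w with
    | none =>
      obtain ⟨x, hx⟩ := hφ.nonempty w (hBsub hw)
      obtain ⟨u, hu, rfl⟩ := (hc2.1 w hwp hbw x hx).1
      exact ⟨u, hu, hx⟩
    | some i =>
      obtain ⟨u, hu, _⟩ := hc2.2.1 w hwp i hbw
      exact ⟨u, hu⟩
  · exact fun w hw => conn2 w (hBsub hw)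
  · intro u hu v hv huv
    rw [Set.disjoint_left]
    rintro x ⟨hxG2, hxφ⟩ ⟨_, hxφ'⟩
    exact (hφ.disj u (hBsub hu) v (hBsub hv) huv).le_bot ⟨hxφ, hxφ'⟩
  · rintro u _ v _ ⟨p, hpB, hpadj⟩
    exact (cond2_of p hpB).2.2 u v hpadj
  · intro w hw hbw u hu
    have hGb := unionOf_bnd_none hG hYc hw hbw
    have h' := hφ.bnd_none w (hBsub hw) hGb _ hu.2
    rwa [glue_bnd_right h1 hu.1] at h'
  · intro w hw i hbw
    have hGb := unionOf_bnd_some_elim hG hYc hw hbw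
    constructor
    · intro u hu
      have h' := (hφ.bnd_some w (hBsub hw) i hGb).1 _ hu.2
      rwa [glue_bnd_right h1 hu.1] at h'
    · obtain ⟨p, hpB, hwp⟩ := mem_unionOf_verts.1 hw
      exact (cond2_of p hpB).2.1 w hwp i hGb
  · intro w _ x; exact x.elim


/-- For a fixed finite set `F` of (unboundaried, unlabeled) graphs, a set
`Pi` of `t`-boundaried graphs, and `t`-boundaried graphs `G1`, `G2` with `G := G1 ⊕ G2`:
`G` has no boundaried `Pi`-minor iff there is `(Pi1, Pi2) ∈ split_F(Pi)` such that `G1` has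
no boundaried `Pi1`-minor and `G2` has no boundaried `Pi2`-minor. -/
theorem stmt13 (t : ℕ) (F : Set (BLG Empty)) (hFfin : F.Finite) (hF : ∀ f ∈ F, f.WF 0)
    (Pi : Set (BLG Empty)) (hPi : ∀ p ∈ Pi, p.WF t)
    (G1 G2 : BLG Empty) (h1 : G1.WF t) (h2 : G2.WF t) :
    (¬ ∃ H ∈ Pi, Minor H (glue G1 G2)) ↔
      ∃ Pi1 Pi2 : Set (BLG Empty), SplitMem F t Pi Pi1 Pi2 ∧
        (¬ ∃ H ∈ Pi1, Minor H G1) ∧ (¬ ∃ H ∈ Pi2, Minor H G2) := by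
  constructor
  · intro hno
    refine ⟨Pi ∪ {H | (∃ G ∈ Pi, ∃ Y ⊆ pcs G, Iso H (unionOf Y)) ∧ ¬ Minor H G1},
      Pi ∪ {H | (∃ G ∈ Pi, ∃ Y ⊆ pcs G, Iso H (unionOf Y)) ∧ ¬ Minor H G2},
      ⟨Set.subset_union_left, Set.subset_union_left, ?_, ?_, ?_⟩, ?_, ?_⟩
    · intro G hG Y hY
      by_cases hm1 : Minor (unionOf Y) G1
      · right
        have hm2 : ¬ Minor (unionOf (pcs G \ Y)) G2 := fun hm2 =>
          hno ⟨G, hG, composition (hPi G hG) h1 h2 hY hm1 hm2⟩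
        exact ⟨unionOf (pcs G \ Y),
          Or.inr ⟨⟨G, hG, pcs G \ Y, Set.diff_subset, iso_refl _⟩, hm2⟩, iso_refl _⟩
      · left
        exact ⟨unionOf Y, Or.inr ⟨⟨G, hG, Y, hY, iso_refl _⟩, hm1⟩, iso_refl _⟩
    · rintro H (hH | ⟨hH, -⟩)
      · exact Or.inl hH
      · exact Or.inr (Or.inl hH)
    · rintro H (hH | ⟨hH, -⟩)
      · exact Or.inl hH
      · exact Or.inr (Or.inl hH)
    · rintro ⟨H, hH | ⟨-, hn⟩, hm⟩
      · exact hno ⟨H, hH, minor_glue_left hm⟩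
      · exact hn hm
    · rintro ⟨H, hH | ⟨-, hn⟩, hm⟩
      · exact hno ⟨H, hH, minor_glue_right h1 h2 hm⟩
      · exact hn hm
  · rintro ⟨Pi1, Pi2, hsplit, hn1, hn2⟩ ⟨H, hHPi, hm⟩
    obtain ⟨Y, hY, hm1, hm2⟩ := decomposition (hPi H hHPi) h1 h2 hm
    rcases hsplit.2.2.1 H hHPi Y hY with ⟨H', hH', hiso⟩ | ⟨H', hH', hiso⟩
    · exact hn1 ⟨H', hH', minor_iso hiso hm1⟩
    · exact hn2 ⟨H', hH', minor_iso hiso hm2⟩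

end

end FDel
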